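/- Let ρ ≥ 0 be real, let λ_2, …, λ_m be complex numbers such that there exists an entrywise nonnegative m×m real matrix whose characteristic polynomial over ℂ is (X − ρ)·∏_{i=2}^{m}(X − λ_i) with ρ the Perron eigenvalue (i.e., ρ ≥ |λ_i| for all i). Let μ_1, …, μ_n be complex numbers such that there exists an entrywise nonnegative n×n real matrix B whose characteristic polynomial over ℂ is ∏_{j=1}^{n}(X − μ_j) and which has some diagonal entry greater than or equal to ρ. Then there exists an entrywise nonnegative (n + m − 1)×(n + m − 1) real matrix whose characteristic polynomial over ℂ is ∏_{j=1}^{n}(X − μ_j) · ∏_{i=2}^{m}(X − λ_i). -/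

import Mathlib

set_option linter.unusedSectionVars false
set_option linter.unusedVariables false
set_option maxHeartbeats 1000000

open Polynomial Matrix Filter Topology

namespace SmigocAux

variable {ι κ : Type*} [Fintype ι] [DecidableEq ι] [Fintype κ] [DecidableEq κ]

lemma mul_nonneg_entries {M N : Matrix ι ι ℝ}
    (hM : ∀ i j, 0 ≤ M i j) (hN : ∀ i j, 0 ≤ N i j) : ∀ i j, 0 ≤ (M * N) i j := by
  intro i j
  rw [Matrix.mul_apply]
  exact Finset.sum_nonneg fun q _ => mul_nonneg (hM i q) (hN q j)

lemma pow_nonneg_entries {M : Matrix ι ι ℝ}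
    (hM : ∀ i j, 0 ≤ M i j) : ∀ N : ℕ, ∀ i j, 0 ≤ (M ^ N) i j := by
  intro N
  induction N with
  | zero =>
    intro i j
    rw [pow_zero, Matrix.one_apply]
    split <;> norm_num
  | succ N ih =>
    rw [pow_succ]
    exact mul_nonneg_entries ih hM

lemma mul_entry_bound {M N : Matrix ι ι ℝ} {b c : ℝ} (hc : 0 ≤ c)
    (hM : ∀ i j, |M i j| ≤ b) (hN : ∀ i j, |N i j| ≤ c) :
    ∀ i j, |(M * N) i j| ≤ (Fintype.card ι : ℝ) * b * c := by
  intro i j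
  rw [Matrix.mul_apply]
  calc |∑ q, M i q * N q j| ≤ ∑ q, |M i q * N q j| := Finset.abs_sum_le_sum_abs _ _
    _ ≤ ∑ _q : ι, b * c := by
        refine Finset.sum_le_sum fun q _ => ?_
        rw [abs_mul]
        exact mul_le_mul (hM i q) (hN q j) (abs_nonneg _) ((abs_nonneg _).trans (hM i q))
    _ = (Fintype.card ι : ℝ) * b * c := by
        rw [Finset.sum_const, Finset.card_univ, nsmul_eq_mul, mul_assoc]

lemma geo_identity (E W : Matrix ι ι ℝ) (hW : W = 1 + E * W) :
    ∀ N : ℕ, W = (∑ k ∈ Finset.range N, E ^ k) + E ^ N * W := by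
  intro N
  induction N with
  | zero => simp
  | succ N ih =>
    calc W = (∑ k ∈ Finset.range N, E ^ k) + E ^ N * W := ih
      _ = (∑ k ∈ Finset.range N, E ^ k) + E ^ N * (1 + E * W) := by rw [← hW]
      _ = (∑ k ∈ Finset.range (N + 1), E ^ k) + E ^ (N + 1) * W := by
          rw [Finset.sum_range_succ, Matrix.mul_add, Matrix.mul_one, pow_succ]
          rw [add_assoc, Matrix.mul_assoc]

lemma geo_nonneg (E W : Matrix ι ι ℝ)
    (hE : ∀ i j, 0 ≤ E i j) {b : ℝ} (hb : ∀ i j, E i j ≤ b)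
    (hsmall : (Fintype.card ι : ℝ) * b < 1) (hW : (1 - E) * W = 1) :
    ∀ i j, 0 ≤ W i j := by
  intro i j
  have hb0 : 0 ≤ b := le_trans (hE i i) (hb i i)
  have hcb0 : 0 ≤ (Fintype.card ι : ℝ) * b := by positivity
  -- bound on entries of W
  set c : ℝ := ∑ q : ι, ∑ r : ι, |W q r| with hc
  have hWc : ∀ q r, |W q r| ≤ c := by
    intro q r
    calc |W q r| ≤ ∑ r : ι, |W q r| :=
          Finset.single_le_sum (fun x _ => abs_nonneg (W q x)) (Finset.mem_univ r)
      _ ≤ c := Finset.single_le_sum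
          (f := fun x => ∑ r : ι, |W x r|)
          (fun x _ => Finset.sum_nonneg fun y _ => abs_nonneg _) (Finset.mem_univ q)
  have hc0 : 0 ≤ c := le_trans (abs_nonneg _) (hWc i j)
  have hEb : ∀ i j, |E i j| ≤ b := fun i j => by
    rw [abs_of_nonneg (hE i j)]; exact hb i j
  -- entry bound on E^N * W
  have hpow : ∀ N : ℕ, ∀ q r, |(E ^ N * W) q r| ≤ ((Fintype.card ι : ℝ) * b) ^ N * c := by
    intro N
    induction N with
    | zero => intro q r; simpa using hWc q r
    | succ N ih =>
      intro q r
      have : E ^ (N + 1) * W = E * (E ^ N * W) := by rw [pow_succ']; rw [Matrix.mul_assoc]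
      rw [this]
      have := mul_entry_bound (M := E) (N := E ^ N * W)
        (by positivity) hEb ih q r
      calc |(E * (E ^ N * W)) q r| ≤ (Fintype.card ι : ℝ) * b * (((Fintype.card ι : ℝ) * b) ^ N * c) := this
        _ = ((Fintype.card ι : ℝ) * b) ^ (N + 1) * c := by ring
  -- identity
  have hW1 : W = 1 + E * W := by
    rw [Matrix.sub_mul, Matrix.one_mul] at hW
    linear_combination (norm := abel) hW
  have hlow : ∀ N : ℕ, -(((Fintype.card ι : ℝ) * b) ^ N * c) ≤ W i j := by
    intro N
    have hid := geo_identity E W hW1 N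
    have : W i j = (∑ k ∈ Finset.range N, E ^ k) i j + (E ^ N * W) i j := by
      rw [← Matrix.add_apply, ← hid]
    rw [this]
    have h1 : 0 ≤ (∑ k ∈ Finset.range N, E ^ k) i j := by
      rw [Matrix.sum_apply]
      exact Finset.sum_nonneg fun q _ => pow_nonneg_entries hE q i j
    have h2 : -(((Fintype.card ι : ℝ) * b) ^ N * c) ≤ (E ^ N * W) i j :=
      neg_le_of_abs_le (hpow N i j)
    linarith
  have htend : Tendsto (fun N : ℕ => -(((Fintype.card ι : ℝ) * b) ^ N * c)) atTop (𝓝 0) := by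
    have := (tendsto_pow_atTop_nhds_zero_of_lt_one hcb0 hsmall).mul_const c
    simpa using this.neg
  exact le_of_tendsto htend (Eventually.of_forall hlow)


/-- resolvent positivity: `(t•1 - A)⁻¹` has nonnegative entries for all `t > ρ`. -/
lemma resolvent_nonneg [Nonempty ι] (A : Matrix ι ι ℝ)
    (hA : ∀ i j, 0 ≤ A i j) (ρ : ℝ) (hρ : 0 ≤ ρ)
    (hdet : ∀ t : ℝ, ρ < t → IsUnit ((t • (1 : Matrix ι ι ℝ) - A).det)) :
    ∀ t : ℝ, ρ < t → ∀ i j, 0 ≤ ((t • (1 : Matrix ι ι ℝ) - A)⁻¹) i j := by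
  classical
  set p : ℝ := (Fintype.card ι : ℝ) with hpdef
  have hp1 : 1 ≤ p := by
    simp only [hpdef]
    exact_mod_cast Fintype.card_pos
  set Mt : ℝ → Matrix ι ι ℝ := fun t => t • (1 : Matrix ι ι ℝ) - A with hMt
  set aC : ℝ := (∑ i : ι, ∑ j : ι, A i j) + 1 with haC
  have haC0 : 0 < aC := by
    have : 0 ≤ ∑ i : ι, ∑ j : ι, A i j :=
      Finset.sum_nonneg fun i _ => Finset.sum_nonneg fun j _ => hA i j
    linarith
  have hAbound : ∀ i j, A i j ≤ aC := by
    intro i j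
    have h1 : A i j ≤ ∑ r : ι, A i r :=
      Finset.single_le_sum (fun x _ => hA i x) (Finset.mem_univ j)
    have h2 : (∑ r : ι, A i r) ≤ ∑ q : ι, ∑ r : ι, A q r :=
      Finset.single_le_sum (f := fun q => ∑ r : ι, A q r)
        (fun x _ => Finset.sum_nonneg fun y _ => hA x y) (Finset.mem_univ i)
    linarith
  set t₀ : ℝ := max (ρ + 1) (p * aC + 1) with ht₀
  have ht₀ρ : ρ < t₀ := lt_of_lt_of_le (by linarith) (le_max_left _ _)
  -- base case
  have base : ∀ t : ℝ, t₀ ≤ t → ∀ i j, 0 ≤ (Mt t)⁻¹ i j := by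
    intro t ht i j
    have htρ : ρ < t := lt_of_lt_of_le ht₀ρ ht
    have ht0 : 0 < t := lt_of_le_of_lt hρ htρ
    have htaC : p * aC < t := lt_of_lt_of_le (lt_of_lt_of_le (by linarith) (le_max_right _ _)) ht
    set E : Matrix ι ι ℝ := t⁻¹ • A with hE
    set W : Matrix ι ι ℝ := t • (Mt t)⁻¹ with hWdef
    have hEnn : ∀ i j, 0 ≤ E i j := fun i j => by
      simp only [hE, Matrix.smul_apply, smul_eq_mul]
      exact mul_nonneg (inv_nonneg.mpr (le_of_lt ht0)) (hA i j)
    have hEb : ∀ i j, E i j ≤ t⁻¹ * aC := fun i j => by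
      simp only [hE, Matrix.smul_apply, smul_eq_mul]
      exact mul_le_mul_of_nonneg_left (hAbound i j) (by positivity)
    have hsmall : p * (t⁻¹ * aC) < 1 := by
      rw [show p * (t⁻¹ * aC) = (p * aC) / t by ring, div_lt_one ht0]
      exact htaC
    have h1E : (1 : Matrix ι ι ℝ) - E = t⁻¹ • Mt t := by
      simp only [hMt, hE, smul_sub, smul_smul]
      rw [inv_mul_cancel₀ (ne_of_gt ht0), one_smul]
    have hWeq : ((1 : Matrix ι ι ℝ) - E) * W = 1 := by
      rw [h1E, hWdef, Matrix.smul_mul, Matrix.mul_smul, smul_smul,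
        inv_mul_cancel₀ (ne_of_gt ht0), one_smul]
      exact Matrix.mul_nonsing_inv _ (hdet t htρ)
    have hWnn := geo_nonneg E W hEnn hEb hsmall hWeq
    have : (Mt t)⁻¹ i j = t⁻¹ * W i j := by
      simp only [hWdef, Matrix.smul_apply, smul_eq_mul]
      field_simp
    rw [this]
    exact mul_nonneg (by positivity) (hWnn i j)
  -- the downward step
  have step : ∀ t t' : ℝ, ρ < t' → t' ≤ t → (∀ i j, 0 ≤ (Mt t)⁻¹ i j) →
      (t - t') * (p * ((∑ i : ι, ∑ j : ι, (Mt t)⁻¹ i j) + 1)) < 1 →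
      ∀ i j, 0 ≤ (Mt t')⁻¹ i j := by
    intro t t' ht' htt' hK hδ
    have htρ : ρ < t := lt_of_lt_of_le ht' htt'
    set K : Matrix ι ι ℝ := (Mt t)⁻¹ with hKdef
    set cK : ℝ := (∑ i : ι, ∑ j : ι, K i j) + 1 with hcK
    have hcK0 : 0 < cK := by
      have : 0 ≤ ∑ i : ι, ∑ j : ι, K i j :=
        Finset.sum_nonneg fun i _ => Finset.sum_nonneg fun j _ => hK i j
      linarith
    have hKb : ∀ i j, K i j ≤ cK := by
      intro i j
      have h1 : K i j ≤ ∑ r : ι, K i r :=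
        Finset.single_le_sum (fun x _ => hK i x) (Finset.mem_univ j)
      have h2 : (∑ r : ι, K i r) ≤ ∑ q : ι, ∑ r : ι, K q r :=
        Finset.single_le_sum (f := fun q => ∑ r : ι, K q r)
          (fun x _ => Finset.sum_nonneg fun y _ => hK x y) (Finset.mem_univ i)
      linarith
    set E : Matrix ι ι ℝ := (t - t') • K with hEdef
    have hEnn : ∀ i j, 0 ≤ E i j := fun i j => by
      simp only [hEdef, Matrix.smul_apply, smul_eq_mul]
      exact mul_nonneg (by linarith) (hK i j)
    have hEb : ∀ i j, E i j ≤ (t - t') * cK := fun i j => by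
      simp only [hEdef, Matrix.smul_apply, smul_eq_mul]
      exact mul_le_mul_of_nonneg_left (hKb i j) (by linarith)
    have hsmall : p * ((t - t') * cK) < 1 := by
      calc p * ((t - t') * cK) = (t - t') * (p * cK) := by ring
        _ < 1 := hδ
    have h1E : (1 : Matrix ι ι ℝ) - E = Mt t' * K := by
      have : Mt t' = Mt t - (t - t') • 1 := by
        simp only [hMt, smul_sub, sub_smul]
        abel
      rw [this, Matrix.sub_mul, Matrix.mul_nonsing_inv _ (hdet t htρ), Matrix.smul_mul,
        Matrix.one_mul]
    set W : Matrix ι ι ℝ := (Mt t')⁻¹ * Mt t with hWdef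
    have hWeq : W * ((1 : Matrix ι ι ℝ) - E) = 1 := by
      rw [h1E, hWdef]
      have hsplit : Mt t = Mt t' + (t - t') • 1 := by
        simp only [hMt, sub_smul]
        abel
      have hcomm : Mt t * Mt t' = Mt t' * Mt t := by
        rw [hsplit, Matrix.add_mul, Matrix.mul_add, Matrix.smul_mul, Matrix.mul_smul,
          Matrix.one_mul, Matrix.mul_one]
      calc (Mt t')⁻¹ * Mt t * (Mt t' * K) = (Mt t')⁻¹ * (Mt t * Mt t') * K := by
            rw [Matrix.mul_assoc, Matrix.mul_assoc, Matrix.mul_assoc]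
        _ = (Mt t')⁻¹ * (Mt t' * Mt t) * K := by rw [hcomm]
        _ = ((Mt t')⁻¹ * Mt t') * (Mt t * K) := by
            rw [Matrix.mul_assoc, Matrix.mul_assoc, Matrix.mul_assoc]
        _ = 1 := by
            rw [Matrix.nonsing_inv_mul _ (hdet t' ht'), Matrix.one_mul, hKdef,
              Matrix.mul_nonsing_inv _ (hdet t htρ)]
    have hWnn := geo_nonneg E W hEnn hEb hsmall (mul_eq_one_comm.mp hWeq)
    have hinv : (Mt t')⁻¹ = W * K := by
      rw [hWdef, Matrix.mul_assoc, hKdef, Matrix.mul_nonsing_inv _ (hdet t htρ),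
        Matrix.mul_one]
    rw [hinv]
    exact mul_nonneg_entries hWnn hK
  -- continuity of the resolvent
  have hcont : ∀ τ : ℝ, ρ < τ → ∀ i j,
      ContinuousAt (fun s : ℝ => (Mt s)⁻¹ i j) τ := by
    intro τ hτ i j
    have hMtc : Continuous Mt := by
      apply Continuous.sub
      · exact continuous_id.smul continuous_const
      · exact continuous_const
    have hdetc : Continuous fun s => (Mt s).det := hMtc.matrix_det
    have hadjc : Continuous fun s => (Mt s).adjugate i j :=
      (hMtc.matrix_adjugate).matrix_elem i j
    have hdetne : (Mt τ).det ≠ 0 := (hdet τ hτ).ne_zero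
    have : ContinuousAt (fun s => ((Mt s).det)⁻¹ * (Mt s).adjugate i j) τ :=
      ((hdetc.continuousAt).inv₀ hdetne).mul hadjc.continuousAt
    apply this.congr
    filter_upwards with s
    rw [Matrix.inv_def, Matrix.smul_apply, Ring.inverse_eq_inv, smul_eq_mul]
  -- connectedness argument
  intro t₁ ht₁
  rcases le_or_gt t₀ t₁ with hcase | hcase
  · exact base t₁ hcase
  set U : Set ℝ := {s | s ∈ Set.Icc t₁ t₀ ∧ ∀ r ∈ Set.Icc s t₀, ∀ i j, 0 ≤ (Mt r)⁻¹ i j}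
    with hU
  have ht₀U : t₀ ∈ U := by
    refine ⟨⟨le_of_lt hcase, le_refl _⟩, fun r hr i j => ?_⟩
    exact base r hr.1 i j
  have hUne : U.Nonempty := ⟨t₀, ht₀U⟩
  have hUbd : BddBelow U := ⟨t₁, fun x hx => hx.1.1⟩
  set τ := sInf U with hτdef
  have hτ₁ : t₁ ≤ τ := le_csInf hUne fun x hx => hx.1.1
  have hττ : τ ≤ t₀ := csInf_le hUbd ht₀U
  have hτρ : ρ < τ := lt_of_lt_of_le ht₁ hτ₁
  have hIoc : ∀ r : ℝ, τ < r → r ≤ t₀ → ∀ i j, 0 ≤ (Mt r)⁻¹ i j := by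
    intro r hr hrt₀ i j
    obtain ⟨x, hxU, hxr⟩ := exists_lt_of_csInf_lt hUne hr
    exact hxU.2 r ⟨le_of_lt hxr, hrt₀⟩ i j
  have hτS : ∀ i j, 0 ≤ (Mt τ)⁻¹ i j := by
    rcases eq_or_lt_of_le hττ with heq | hlt
    · intro i j; rw [heq]; exact base t₀ (le_refl _) i j
    · intro i j
      have htd : Tendsto (fun s : ℝ => (Mt s)⁻¹ i j) (𝓝[>] τ) (𝓝 ((Mt τ)⁻¹ i j)) :=
        ((hcont τ hτρ i j).tendsto).mono_left nhdsWithin_le_nhds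
      refine ge_of_tendsto htd ?_
      filter_upwards [Ioo_mem_nhdsGT hlt] with s hs
      exact hIoc s hs.1 (le_of_lt hs.2) i j
  -- now show τ = t₁
  rcases eq_or_lt_of_le hτ₁ with heq | hlt
  · intro i j
    have h := hτS i j
    rwa [← heq] at h
  · exfalso
    have hsum0 : 0 ≤ ∑ i : ι, ∑ j : ι, (Mt τ)⁻¹ i j :=
      Finset.sum_nonneg fun i _ => Finset.sum_nonneg fun j _ => hτS i j
    obtain ⟨cK, hcKd⟩ : ∃ c : ℝ, c = (∑ i : ι, ∑ j : ι, (Mt τ)⁻¹ i j) + 1 := ⟨_, rfl⟩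
    have hcK0 : 0 < cK := by rw [hcKd]; linarith
    have hp0 : 0 < p := by linarith
    have hpcK : 0 < p * cK := mul_pos hp0 hcK0
    obtain ⟨δ, hδd⟩ : ∃ d : ℝ, d = min ((2 * (p * cK))⁻¹) ((τ - t₁) / 2) := ⟨_, rfl⟩
    have hδ0 : 0 < δ := by
      rw [hδd]
      apply lt_min
      · positivity
      · linarith
    have hδ1 : δ ≤ (2 * (p * cK))⁻¹ := by rw [hδd]; exact min_le_left _ _
    have hδ2 : δ ≤ (τ - t₁) / 2 := by rw [hδd]; exact min_le_right _ _
    have ht'ρ : ρ < τ - δ := by linarith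
    have hseg : ∀ r ∈ Set.Icc (τ - δ) τ, ∀ i j, 0 ≤ (Mt r)⁻¹ i j := by
      intro r hr
      rcases eq_or_lt_of_le hr.2 with heq2 | hlt2
      · rw [heq2]; exact hτS
      · refine step τ r ?_ (le_of_lt hlt2) hτS ?_
        · linarith [hr.1]
        · rw [← hcKd]
          have h1 : τ - r ≤ δ := by linarith [hr.1]
          calc (τ - r) * (p * cK) ≤ δ * (p * cK) :=
                mul_le_mul_of_nonneg_right h1 (le_of_lt hpcK)
            _ ≤ (2 * (p * cK))⁻¹ * (p * cK) :=
                mul_le_mul_of_nonneg_right hδ1 (le_of_lt hpcK)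
            _ < 1 := by
                rw [inv_mul_eq_div, div_lt_one (by linarith)]
                linarith
    have ht'U : (τ - δ) ∈ U := by
      refine ⟨⟨by linarith, by linarith⟩, fun r hr i j => ?_⟩
      rcases le_or_gt r τ with h1 | h1
      · exact hseg r ⟨hr.1, h1⟩ i j
      · exact hIoc r h1 hr.2 i j
    have : τ ≤ τ - δ := csInf_le hUbd ht'U
    linarith


theorem aux_tendsto_mul (A : Matrix ι ι ℝ)
    (t : ℕ → ℝ) (P : ℕ → Matrix ι ι ℝ) (ρ : ℝ) (Pl : Matrix ι ι ℝ)
    (h1 : Tendsto t atTop (𝓝 ρ)) (h2 : Tendsto P atTop (𝓝 Pl)) :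
    Tendsto (fun j => (t j • (1:Matrix ι ι ℝ) - A) * P j) atTop
      (𝓝 ((ρ • (1:Matrix ι ι ℝ) - A) * Pl)) := by
  have hent : ∀ r q, Tendsto (fun j => P j r q) atTop (𝓝 (Pl r q)) := by
    intro r q
    have hc : Continuous fun N : Matrix ι ι ℝ => N r q := continuous_id.matrix_elem r q
    exact (hc.tendsto Pl).comp h2
  apply tendsto_pi_nhds.mpr
  intro i
  apply tendsto_pi_nhds.mpr
  intro q
  have hmul : ∀ (x : ℝ) (N : Matrix ι ι ℝ),
      ((x • (1:Matrix ι ι ℝ) - A) * N) i q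
        = ∑ r : ι, (x * (1:Matrix ι ι ℝ) i r - A i r) * N r q := by
    intro x N
    rw [Matrix.mul_apply]
    congr 1
  simp only [hmul]
  apply tendsto_finset_sum
  intro r _
  exact (((h1.mul_const _).sub_const _).mul (hent r q))

/-- Perron eigenvector for a nonnegative matrix whose spectral "edge" is `ρ`. -/
lemma perron_eigenvector [Nonempty ι] (A : Matrix ι ι ℝ)
    (hA : ∀ i j, 0 ≤ A i j) (ρ : ℝ) (hρ : 0 ≤ ρ)
    (hdet : ∀ t : ℝ, ρ < t → IsUnit ((t • (1 : Matrix ι ι ℝ) - A).det))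
    (h0 : ((ρ • (1 : Matrix ι ι ℝ) - A).det) = 0) :
    ∃ u : ι → ℝ, (∀ i, 0 ≤ u i) ∧ u ≠ 0 ∧ A *ᵥ u = ρ • u := by
  classical
  set Mt : ℝ → Matrix ι ι ℝ := fun t => t • (1 : Matrix ι ι ℝ) - A with hMt
  set t : ℕ → ℝ := fun j => ρ + ((j : ℝ) + 1)⁻¹ with htdef
  have ht : ∀ j, ρ < t j := fun j => by
    simp only [htdef]
    have : (0:ℝ) < ((j : ℝ) + 1)⁻¹ := by positivity
    linarith
  have httρ : Tendsto t atTop (𝓝 ρ) := by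
    have h1 : Tendsto (fun j : ℕ => ((j : ℝ) + 1)⁻¹) atTop (𝓝 0) := by
      have := tendsto_one_div_add_atTop_nhds_zero_nat (𝕜 := ℝ)
      simpa [one_div] using this
    have := h1.const_add ρ
    simpa using this
  obtain ⟨M, hM⟩ : ∃ M : ℕ → Matrix ι ι ℝ, ∀ j, M j = (Mt (t j))⁻¹ := ⟨_, fun _ => rfl⟩
  have hMnn : ∀ j i q, 0 ≤ M j i q := fun j i q => by
    rw [hM j]
    exact resolvent_nonneg A hA ρ hρ hdet (t j) (ht j) i q
  obtain ⟨σ, hσ⟩ : ∃ σ : ℕ → ℝ, ∀ j, σ j = ∑ i : ι, ∑ q : ι, M j i q := ⟨_, fun _ => rfl⟩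
  have hσ0 : ∀ j, 0 ≤ σ j := fun j => by
    rw [hσ j]
    exact Finset.sum_nonneg fun i _ => Finset.sum_nonneg fun q _ => hMnn j i q
  have hσb : ∀ j i q, M j i q ≤ σ j := by
    intro j i q
    have h1 : M j i q ≤ ∑ r : ι, M j i r :=
      Finset.single_le_sum (fun x _ => hMnn j i x) (Finset.mem_univ q)
    have h2 : (∑ r : ι, M j i r) ≤ σ j := by
      rw [hσ j]
      exact Finset.single_le_sum (f := fun x => ∑ r : ι, M j x r)
        (fun x _ => Finset.sum_nonneg fun y _ => hMnn j x y) (Finset.mem_univ i)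
    linarith
  obtain ⟨ε, hε⟩ : ∃ ε : ℕ → ℝ, ∀ j, ε j = (1 + σ j)⁻¹ := ⟨_, fun _ => rfl⟩
  have hεpos : ∀ j, 0 < ε j := fun j => by
    have := hσ0 j
    rw [hε j]
    positivity
  have hε1 : ∀ j, ε j ≤ 1 := fun j => by
    have := hσ0 j
    rw [hε j, inv_le_one_iff₀]
    right; linarith
  obtain ⟨P, hP⟩ : ∃ P : ℕ → Matrix ι ι ℝ, ∀ j, P j = ε j • M j := ⟨_, fun _ => rfl⟩
  have hPmem : ∀ j, (∀ i q, P j i q ∈ Set.Icc (0:ℝ) 1) := by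
    intro j i q
    constructor
    · rw [hP j]
      exact mul_nonneg (le_of_lt (hεpos j)) (hMnn j i q)
    · have h1 : M j i q ≤ 1 + σ j := by linarith [hσb j i q, hσ0 j]
      have h2 : (0:ℝ) < 1 + σ j := by linarith [hσ0 j]
      rw [hP j]
      simp only [Matrix.smul_apply, smul_eq_mul]
      rw [hε j, inv_mul_le_iff₀ h2]
      linarith
  -- compactness
  haveI : FirstCountableTopology (Matrix ι ι ℝ) :=
    inferInstanceAs (FirstCountableTopology (ι → ι → ℝ))
  set K₁ : Set (Matrix ι ι ℝ) := Set.univ.pi fun _ : ι => Set.univ.pi fun _ : ι => Set.Icc (0:ℝ) 1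
    with hK₁
  have hK₁c : IsCompact K₁ :=
    isCompact_univ_pi fun _ => isCompact_univ_pi fun _ => isCompact_Icc
  have hKc : IsCompact (K₁ ×ˢ Set.Icc (0:ℝ) 1) := hK₁c.prod isCompact_Icc
  have hxmem : ∀ j, (P j, ε j) ∈ K₁ ×ˢ Set.Icc (0:ℝ) 1 := by
    intro j
    constructor
    · intro i _
      intro q _
      exact hPmem j i q
    · exact ⟨le_of_lt (hεpos j), hε1 j⟩
  obtain ⟨⟨Pl, εl⟩, hlmem, φ, hφ, hφtend⟩ := hKc.tendsto_subseq hxmem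
  have hPl : Tendsto (fun j => P (φ j)) atTop (𝓝 Pl) :=
    (continuous_fst.tendsto _).comp hφtend
  have hεl : Tendsto (fun j => ε (φ j)) atTop (𝓝 εl) :=
    (continuous_snd.tendsto _).comp hφtend
  have htφ : Tendsto (fun j => t (φ j)) atTop (𝓝 ρ) := httρ.comp hφ.tendsto_atTop
  -- key identity
  have hkey : ∀ j, Mt (t j) * P j = ε j • 1 := by
    intro j
    rw [hP j, Matrix.mul_smul, hM j]
    rw [Matrix.mul_nonsing_inv _ (hdet (t j) (ht j))]
  -- limit equation
  have hlim : Mt ρ * Pl = εl • 1 := by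
    have h2 : Tendsto (fun j => (t (φ j) • (1:Matrix ι ι ℝ) - A) * P (φ j)) atTop
        (𝓝 ((ρ • (1:Matrix ι ι ℝ) - A) * Pl)) :=
      aux_tendsto_mul A (fun j => t (φ j)) (fun j => P (φ j)) ρ Pl htφ hPl
    have h3 : Tendsto (fun j => ε (φ j) • (1 : Matrix ι ι ℝ)) atTop (𝓝 (εl • 1)) :=
      hεl.smul_const 1
    have h4 : (fun j => (t (φ j) • (1:Matrix ι ι ℝ) - A) * P (φ j))
        = fun j => ε (φ j) • (1 : Matrix ι ι ℝ) := by
      funext j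
      exact hkey (φ j)
    rw [h4] at h2
    exact tendsto_nhds_unique h2 h3
  -- εl = 0
  have hεl0 : εl = 0 := by
    have hd := congrArg Matrix.det hlim
    rw [Matrix.det_mul, h0, zero_mul, Matrix.det_smul, Matrix.det_one, mul_one] at hd
    have hcard : Fintype.card ι ≠ 0 := Fintype.card_ne_zero
    exact pow_eq_zero_iff hcard |>.mp hd.symm
  -- sum of entries of Pl is 1
  have hsums : (∑ i : ι, ∑ q : ι, Pl i q) = 1 := by
    have hc : Continuous fun N : Matrix ι ι ℝ => ∑ i : ι, ∑ q : ι, N i q := by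
      apply continuous_finset_sum
      intro i _
      apply continuous_finset_sum
      intro q _
      exact continuous_id.matrix_elem i q
    have h1 : Tendsto (fun j => ∑ i : ι, ∑ q : ι, P (φ j) i q) atTop
        (𝓝 (∑ i : ι, ∑ q : ι, Pl i q)) := (hc.tendsto Pl).comp hPl
    have h2 : ∀ j, (∑ i : ι, ∑ q : ι, P j i q) = 1 - ε j := by
      intro j
      have hne : (1 + σ j) ≠ 0 := by linarith [hσ0 j]
      rw [hP j]
      simp only [Matrix.smul_apply, smul_eq_mul, ← Finset.mul_sum]
      rw [← hσ j, hε j]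
      field_simp
      ring
    have h3 : Tendsto (fun j => ∑ i : ι, ∑ q : ι, P (φ j) i q) atTop (𝓝 (1 - εl)) := by
      have := hεl.const_sub 1
      apply this.congr
      intro j
      rw [h2 (φ j)]
    have := tendsto_nhds_unique h1 h3
    rw [this, hεl0, sub_zero]
  -- Pl entries nonneg
  have hPlnn : ∀ i q, 0 ≤ Pl i q := by
    intro i q
    exact (hlmem.1 i (Set.mem_univ i) q (Set.mem_univ q)).1
  -- find nonzero column
  have hex : ∃ i₀ q₀, 0 < Pl i₀ q₀ := by
    by_contra h
    push_neg at h
    have : (∑ i : ι, ∑ q : ι, Pl i q) = 0 := by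
      apply Finset.sum_eq_zero
      intro i _
      apply Finset.sum_eq_zero
      intro q _
      exact le_antisymm (h i q) (hPlnn i q)
    rw [this] at hsums
    norm_num at hsums
  obtain ⟨i₀, q₀, hq₀⟩ := hex
  refine ⟨fun i => Pl i q₀, fun i => hPlnn i q₀, ?_, ?_⟩
  · intro h
    have := congrFun h i₀
    simp only [Pi.zero_apply] at this
    rw [this] at hq₀
    exact lt_irrefl _ hq₀
  · rw [hεl0, zero_smul] at hlim
    have hcol : ∀ i, (Mt ρ *ᵥ fun q => Pl q q₀) i = 0 := by
      intro i
      have := congrFun (congrFun hlim i) q₀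
      simpa [Matrix.mul_apply, Matrix.mulVec, dotProduct] using this
    have : Mt ρ *ᵥ (fun q => Pl q q₀) = 0 := funext hcol
    rw [hMt] at this
    rw [Matrix.sub_mulVec, Matrix.smul_mulVec, Matrix.one_mulVec] at this
    have h5 : ρ • (fun q => Pl q q₀) - A *ᵥ (fun q => Pl q q₀) = 0 := this
    exact (sub_eq_zero.mp h5).symm


lemma eval_charpoly (M : Matrix ι ι ℝ) (t : ℝ) :
    M.charpoly.eval t = (t • (1 : Matrix ι ι ℝ) - M).det := by
  rw [Matrix.charpoly, ← Polynomial.coe_evalRingHom, RingHom.map_det]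
  congr 1
  ext i j
  by_cases h : i = j
  · subst h
    simp [Matrix.charmatrix_apply_eq, Matrix.smul_apply, Matrix.one_apply_eq]
  · simp [Matrix.charmatrix_apply_ne _ _ _ h, Matrix.one_apply_ne h]

lemma mul_vecMulVec (M : Matrix ι ι ℝ) (u : ι → ℝ) (y : κ → ℝ) :
    M * Matrix.vecMulVec u y = Matrix.vecMulVec (M *ᵥ u) y := by
  ext i j
  simp only [Matrix.mul_apply, Matrix.vecMulVec_apply, Matrix.mulVec, dotProduct,
    Finset.sum_mul]
  exact Finset.sum_congr rfl fun q _ => by ring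

lemma vecMulVec_mul (u : ι → ℝ) (c : κ → ℝ) (Q : Matrix κ κ ℝ) :
    Matrix.vecMulVec u c * Q = Matrix.vecMulVec u (c ᵥ* Q) := by
  ext i j
  simp only [Matrix.mul_apply, Matrix.vecMulVec_apply, Matrix.vecMul, dotProduct,
    Finset.mul_sum]
  exact Finset.sum_congr rfl fun q _ => by ring

lemma vecMulVec_mul_vecMulVec (u : ι → ℝ) (v : κ → ℝ) (b : κ → ℝ) (y : ι → ℝ) :
    Matrix.vecMulVec u v * Matrix.vecMulVec b y = (v ⬝ᵥ b) • Matrix.vecMulVec u y := by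
  ext i j
  simp only [Matrix.mul_apply, Matrix.vecMulVec_apply, Matrix.smul_apply, dotProduct,
    smul_eq_mul, Finset.sum_mul, Finset.mul_sum]
  exact Finset.sum_congr rfl fun q _ => by ring

lemma smul_vecMulVec (c : ℝ) (u : ι → ℝ) (y : κ → ℝ) :
    Matrix.vecMulVec (c • u) y = c • Matrix.vecMulVec u y := by
  ext i j
  simp [Matrix.vecMulVec_apply, mul_assoc]

lemma det_one_sub_smul_vecMulVec (c : ℝ) (u y : ι → ℝ) :
    ((1 : Matrix ι ι ℝ) - c • Matrix.vecMulVec u y).det = 1 - c * (y ⬝ᵥ u) := by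
  have h1 : (1 : Matrix ι ι ℝ) - c • Matrix.vecMulVec u y
      = 1 + Matrix.replicateCol Unit ((-c) • u) * Matrix.replicateRow Unit y := by
    rw [← Matrix.vecMulVec_eq, smul_vecMulVec, neg_smul, ← sub_eq_add_neg]
  rw [h1, Matrix.det_one_add_replicateCol_mul_replicateRow, dotProduct_smul]
  simp only [smul_eq_mul]
  ring

lemma map_eval_eq (q : ℝ[X]) (t : ℝ) :
    (q.map (algebraMap ℝ ℂ)).eval ((t : ℝ) : ℂ) = algebraMap ℝ ℂ (q.eval t) := by
  rw [Polynomial.eval_map,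
    show ((t : ℝ) : ℂ) = algebraMap ℝ ℂ t from rfl,
    Polynomial.eval₂_at_apply]


end SmigocAux

open SmigocAux

/-- Šmigoc's gluing theorem. If `(ρ, λ_2, …, λ_m)` is realisable with
Perron eigenvalue `ρ` and `(μ_1, …, μ_n)` is realisable by a nonnegative matrix having a
diagonal entry `≥ ρ`, then `(μ_1, …, μ_n, λ_2, …, λ_m)` is realisable by a nonnegative
`(n+m−1) × (n+m−1)` matrix. -/
theorem smigoc_glue (m n : ℕ) (hm : 1 ≤ m) (hn : 1 ≤ n) (ρ : ℝ) (hρ : 0 ≤ ρ)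
    (l : ℕ → ℂ) (μ : ℕ → ℂ)
    (hPerron : ∀ i ∈ Finset.Icc 2 m, ‖l i‖ ≤ ρ)
    (hA : ∃ A : Matrix (Fin m) (Fin m) ℝ, (∀ i j, 0 ≤ A i j) ∧
      A.charpoly.map (algebraMap ℝ ℂ) =
        (X - C (ρ : ℂ)) * ∏ i ∈ Finset.Icc 2 m, (X - C (l i)))
    (hB : ∃ B : Matrix (Fin n) (Fin n) ℝ, (∀ i j, 0 ≤ B i j) ∧
      B.charpoly.map (algebraMap ℝ ℂ) = (∏ j ∈ Finset.range n, (X - C (μ j))) ∧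
      ∃ i : Fin n, ρ ≤ B i i) :
    ∃ M : Matrix (Fin (n + m - 1)) (Fin (n + m - 1)) ℝ, (∀ i j, 0 ≤ M i j) ∧
      M.charpoly.map (algebraMap ℝ ℂ) =
        (∏ j ∈ Finset.range n, (X - C (μ j))) *
          ∏ i ∈ Finset.Icc 2 m, (X - C (l i)) := by
  classical
  obtain ⟨A, hA0, hAcp⟩ := hA
  obtain ⟨B, hB0, hBcp, k, hk⟩ := hB
  haveI : Nonempty (Fin m) := ⟨⟨0, hm⟩⟩
  -- eigenvalue facts for A over ℝ, via the complex factorization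
  have hevalA : ∀ t : ℝ, algebraMap ℝ ℂ ((t • (1 : Matrix (Fin m) (Fin m) ℝ) - A).det)
      = ((t : ℂ) - ρ) * ∏ i ∈ Finset.Icc 2 m, ((t : ℂ) - l i) := by
    intro t
    rw [← SmigocAux.eval_charpoly, ← map_eval_eq, hAcp]
    simp [Polynomial.eval_prod]
  have hdetA : ∀ t : ℝ, ρ < t → IsUnit ((t • (1 : Matrix (Fin m) (Fin m) ℝ) - A).det) := by
    intro t ht
    rw [isUnit_iff_ne_zero]
    intro h
    have h2 := hevalA t
    rw [h, map_zero] at h2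
    have h3 : ((t : ℂ) - ρ) * ∏ i ∈ Finset.Icc 2 m, ((t : ℂ) - l i) ≠ 0 := by
      apply mul_ne_zero
      · rw [sub_ne_zero]
        intro hc
        have : t = ρ := by exact_mod_cast hc
        linarith
      · rw [Finset.prod_ne_zero_iff]
        intro i hi
        rw [sub_ne_zero]
        intro hc
        have habs := hPerron i hi
        rw [← hc] at habs
        rw [Complex.norm_real, Real.norm_eq_abs] at habs
        rw [abs_of_pos (lt_of_le_of_lt hρ ht)] at habs
        linarith
    exact h3 h2.symm
  have h0A : ((ρ • (1 : Matrix (Fin m) (Fin m) ℝ) - A).det) = 0 := by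
    have h2 := hevalA ρ
    rw [sub_self, zero_mul] at h2
    exact (map_eq_zero_iff _ (algebraMap ℝ ℂ).injective).mp h2
  -- Perron eigenvector
  obtain ⟨u, hu0, hune, huA⟩ := perron_eigenvector A hA0 ρ hρ hdetA h0A
  obtain ⟨k₀, hk₀⟩ : ∃ k₀, 0 < u k₀ := by
    obtain ⟨i, hi⟩ := Function.ne_iff.mp hune
    exact ⟨i, lt_of_le_of_ne (hu0 i) (Ne.symm (by simpa using hi))⟩
  set y : Fin m → ℝ := Pi.single k₀ (u k₀)⁻¹ with hy
  have hy0 : ∀ j, 0 ≤ y j := by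
    intro j
    rw [hy, Pi.single_apply]
    split
    · positivity
    · exact le_refl 0
  have hyu : y ⬝ᵥ u = 1 := by
    rw [hy, dotProduct]
    rw [Finset.sum_eq_single k₀]
    · simp [inv_mul_cancel₀ (ne_of_gt hk₀)]
    · intro b _ hb
      simp [Pi.single_apply, hb]
    · intro h
      exact absurd (Finset.mem_univ k₀) h
  -- the glued matrix
  set α : Type := {i : Fin n // ¬ i = k} with hα
  set B₁ : Matrix α α ℝ := Matrix.of fun i j => B i.1 j.1 with hB₁
  set bv : α → ℝ := fun i => B i.1 k with hbv
  set cv : α → ℝ := fun j => B k j.1 with hcv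
  set V : Matrix (Fin m) (Fin m) ℝ := Matrix.vecMulVec u y with hV
  set A' : Matrix (Fin m) (Fin m) ℝ := A + (B k k - ρ) • V with hA'
  set CM : Matrix (α ⊕ Fin m) (α ⊕ Fin m) ℝ :=
    Matrix.fromBlocks B₁ (Matrix.vecMulVec bv y) (Matrix.vecMulVec u cv) A' with hCM
  have hCM0 : ∀ i j, 0 ≤ CM i j := by
    rintro (i | i) (j | j) <;>
      simp only [hCM, Matrix.fromBlocks_apply₁₁, Matrix.fromBlocks_apply₁₂,
        Matrix.fromBlocks_apply₂₁, Matrix.fromBlocks_apply₂₂]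
    · exact hB0 i.1 j.1
    · exact mul_nonneg (hB0 i.1 k) (hy0 j)
    · exact mul_nonneg (hu0 i) (hB0 k j.1)
    · have h1 : 0 ≤ (B k k - ρ) * (u i * y j) :=
        mul_nonneg (by linarith) (mul_nonneg (hu0 i) (hy0 j))
      have h2 := hA0 i j
      simp only [hA', Matrix.add_apply, Matrix.smul_apply, hV, Matrix.vecMulVec_apply,
        smul_eq_mul]
      linarith
  -- the key polynomial identity over ℝ
  have key : (X - Polynomial.C ρ) * CM.charpoly = A.charpoly * B.charpoly := by
    apply Polynomial.eq_of_infinite_eval_eq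
    have hfin : ({t : ℝ | (B₁.charpoly).IsRoot t} ∪ {ρ}).Finite :=
      (Polynomial.finite_setOf_isRoot (B₁.charpoly_monic.ne_zero)).union
        (Set.finite_singleton ρ)
    refine Set.Infinite.mono ?_ hfin.infinite_compl
    intro t ht
    simp only [Set.mem_compl_iff, Set.mem_union, Set.mem_setOf_eq, Set.mem_singleton_iff,
      not_or] at ht
    obtain ⟨hrootB₁, htρ⟩ := ht
    have hdetB₁ : ((t • (1 : Matrix α α ℝ) - B₁).det) ≠ 0 := by
      rw [← SmigocAux.eval_charpoly]
      exact hrootB₁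
    show Polynomial.eval t _ = Polynomial.eval t _
    rw [Polynomial.eval_mul, Polynomial.eval_mul, Polynomial.eval_sub, Polynomial.eval_X,
      Polynomial.eval_C, SmigocAux.eval_charpoly, SmigocAux.eval_charpoly, SmigocAux.eval_charpoly]
    haveI hQI : Invertible (t • (1 : Matrix α α ℝ) - B₁) :=
      Matrix.invertibleOfIsUnitDet _ (isUnit_iff_ne_zero.mpr hdetB₁)
    set Q : Matrix α α ℝ := ⅟(t • (1 : Matrix α α ℝ) - B₁) with hQ
    set s : ℝ := cv ⬝ᵥ (Q *ᵥ bv) with hs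
    -- block decomposition of t•1 - CM
    have hblock : t • (1 : Matrix (α ⊕ Fin m) (α ⊕ Fin m) ℝ) - CM
        = Matrix.fromBlocks (t • 1 - B₁) (-(Matrix.vecMulVec bv y))
            (-(Matrix.vecMulVec u cv)) (t • 1 - A') := by
      ext i j
      rcases i with i | i <;> rcases j with j | j <;>
        simp [hCM, Matrix.one_apply, Matrix.smul_apply, Matrix.sub_apply, Sum.inl.injEq,
          Sum.inr.injEq]
    -- Schur step for CM
    have hmid : (-(Matrix.vecMulVec u cv)) * Q * (-(Matrix.vecMulVec bv y)) = s • V := by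
      rw [Matrix.neg_mul, Matrix.neg_mul, Matrix.mul_neg, neg_neg, SmigocAux.vecMulVec_mul, SmigocAux.vecMulVec_mul_vecMulVec, hV]
      congr 1
      rw [hs, Matrix.dotProduct_mulVec]
    have hone : (t • (1:Matrix (Fin m) (Fin m) ℝ) - A) *ᵥ u = (t - ρ) • u := by
      rw [Matrix.sub_mulVec, Matrix.smul_mulVec, Matrix.one_mulVec, huA, sub_smul]
    have hfact : (t • (1:Matrix (Fin m) (Fin m) ℝ) - A)
          * ((1:Matrix (Fin m) (Fin m) ℝ) - (((B k k - ρ) + s) / (t - ρ)) • V)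
        = (t • (1:Matrix (Fin m) (Fin m) ℝ) - A) - ((B k k - ρ) + s) • V := by
      rw [Matrix.mul_sub, Matrix.mul_one, Matrix.mul_smul, hV, SmigocAux.mul_vecMulVec, hone,
        SmigocAux.smul_vecMulVec, smul_smul, div_mul_cancel₀ _ (sub_ne_zero.mpr htρ)]
    have hsub : (t • (1:Matrix (Fin m) (Fin m) ℝ) - A')
          - (-(Matrix.vecMulVec u cv)) * Q * (-(Matrix.vecMulVec bv y))
        = (t • (1:Matrix (Fin m) (Fin m) ℝ) - A) - ((B k k - ρ) + s) • V := by
      rw [hmid, hA', add_smul]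
      abel
    have hdetCM : (t • (1 : Matrix (α ⊕ Fin m) (α ⊕ Fin m) ℝ) - CM).det
        = (t • (1 : Matrix α α ℝ) - B₁).det
          * ((t • (1:Matrix (Fin m) (Fin m) ℝ) - A).det
            * (1 - ((B k k - ρ) + s) / (t - ρ) * (y ⬝ᵥ u))) := by
      rw [hblock, Matrix.det_fromBlocks₁₁, ← hQ, hsub, ← hfact, Matrix.det_mul,
        det_one_sub_smul_vecMulVec]
    -- Schur step for B
    haveI : Unique {i : Fin n // i = k} := ⟨⟨⟨k, rfl⟩⟩, fun a => Subtype.ext a.2⟩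
    have hdetB : (t • (1 : Matrix (Fin n) (Fin n) ℝ) - B).det
        = (t • (1:Matrix α α ℝ) - B₁).det * ((t - B k k) - s) := by
      set e : α ⊕ {i : Fin n // i = k} ≃ Fin n :=
        (Equiv.sumComm α {i : Fin n // i = k}).trans (Equiv.sumCompl (fun i : Fin n => i = k))
        with he
      rw [← Matrix.det_submatrix_equiv_self e (t • (1 : Matrix (Fin n) (Fin n) ℝ) - B)]
      have hBb : (t • (1 : Matrix (Fin n) (Fin n) ℝ) - B).submatrix e e
          = Matrix.fromBlocks (t • 1 - B₁)
              (-(Matrix.of fun (i : α) (_ : {i : Fin n // i = k}) => bv i))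
              (-(Matrix.of fun (_ : {i : Fin n // i = k}) (j : α) => cv j))
              (t • 1 - Matrix.of fun (_ _ : {i : Fin n // i = k}) => B k k) := by
        ext i j
        rcases i with i | ⟨i, hi⟩ <;> rcases j with j | ⟨j, hj⟩
        · simp [he, Equiv.trans_apply, Equiv.sumCompl_apply_inl, Equiv.sumCompl_apply_inr, Matrix.submatrix_apply, Matrix.one_apply, hB₁, Subtype.ext_iff]
          rfl
        · subst hj
          have : (i : Fin n) ≠ j := i.2
          simp [he, Equiv.trans_apply, Equiv.sumCompl_apply_inl, Equiv.sumCompl_apply_inr, Matrix.submatrix_apply, Matrix.one_apply, this, hbv]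
          rfl
        · subst hi
          have : (i : Fin n) ≠ (j : Fin n) := fun hc => j.2 hc.symm
          simp [he, Equiv.trans_apply, Equiv.sumCompl_apply_inl, Equiv.sumCompl_apply_inr, Matrix.submatrix_apply, Matrix.one_apply, this, hcv]
          rfl
        · subst hi
          subst hj
          simp [he, Equiv.trans_apply, Equiv.sumCompl_apply_inl, Equiv.sumCompl_apply_inr, Matrix.submatrix_apply, Matrix.one_apply]
          rfl
      rw [hBb, Matrix.det_fromBlocks₁₁, ← hQ]
      congr 1
      have hentry : ((-(Matrix.of fun (_ : {i : Fin n // i = k}) (j : α) => cv j)) * Q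
          * (-(Matrix.of fun (i : α) (_ : {i : Fin n // i = k}) => bv i)))
            default default = s := by
        rw [Matrix.neg_mul, Matrix.neg_mul, Matrix.mul_neg, neg_neg, hs,
          Matrix.dotProduct_mulVec]
        simp [Matrix.mul_apply, Matrix.vecMul, dotProduct, Finset.sum_mul]
      rw [Matrix.det_unique, Matrix.sub_apply, hentry, Matrix.sub_apply,
        Matrix.smul_apply, Matrix.one_apply_eq]
      simp
    rw [hdetCM, hdetB, hyu, mul_one]
    have hne : t - ρ ≠ 0 := sub_ne_zero.mpr htρ
    field_simp
    ring
  -- push to ℂ and cancel X - ρ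
  have keyC := congrArg (Polynomial.map (algebraMap ℝ ℂ)) key
  rw [Polynomial.map_mul, Polynomial.map_mul, Polynomial.map_sub, Polynomial.map_X,
    Polynomial.map_C, hAcp, hBcp] at keyC
  have hCcp : CM.charpoly.map (algebraMap ℝ ℂ)
      = (∏ j ∈ Finset.range n, (X - C (μ j))) * ∏ i ∈ Finset.Icc 2 m, (X - C (l i)) := by
    apply mul_left_cancel₀ (Polynomial.X_sub_C_ne_zero ((ρ : ℂ)))
    rw [show ((algebraMap ℝ ℂ) ρ) = (ρ : ℂ) from rfl] at keyC
    rw [keyC]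
    ring
  -- reindex to Fin (n + m - 1)
  have hcard : Fintype.card (α ⊕ Fin m) = n + m - 1 := by
    rw [Fintype.card_sum, Fintype.card_fin]
    have h1 : Fintype.card {i : Fin n // ¬ i = k} = n - 1 := by
      rw [Fintype.card_subtype_compl, Fintype.card_subtype_eq, Fintype.card_fin]
    have h2 : Fintype.card α = n - 1 := h1
    omega
  have e2 : (α ⊕ Fin m) ≃ Fin (n + m - 1) := Fintype.equivFinOfCardEq hcard
  refine ⟨Matrix.reindex e2 e2 CM, ?_, ?_⟩
  · intro i j
    rw [Matrix.reindex_apply, Matrix.submatrix_apply]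
    exact hCM0 _ _
  · rw [Matrix.charpoly_reindex, hCcp]
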